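/- Let Z and W be nonempty words over the alphabet {L, M, R} satisfying ZW = W̄Z̄. Set m = |ZW|, r = |W| and d = gcd(m, r). If m/d is odd, then ZW = M^m, i.e., every letter of Z and of W is M. -/

import Mathlib

/-- The three-letter alphabet {L, M, R}. -/
inductive Letter : Type
  | L | M | R
deriving DecidableEq, Repr

/-- Complementation on letters: R̄ = L, L̄ = R, M̄ = M. -/
def Letter.bar : Letter → Letter
  | .L => .R
  | .M => .M
  | .R => .L

/-- Complement of a word (letterwise). -/
def comp (w : List Letter) : List Letter := w.map Letter.bar

/-- k-fold concatenation of a word with itself. -/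
def npow (w : List Letter) : ℕ → List Letter
  | 0 => []
  | n + 1 => w ++ npow w n

lemma bar_bar (a : Letter) : a.bar.bar = a := by cases a <;> rfl

lemma comp_comp (l : List Letter) : comp (comp l) = l := by
  simp [comp, List.map_map, Function.comp_def, bar_bar]

lemma comp_rotate (l : List Letter) (n : ℕ) :
    comp (l.rotate n) = (comp l).rotate n := List.map_rotate _ _ _

lemma fixed_repl (l : List Letter) (h : comp l = l) :
    l = List.replicate l.length Letter.M := by
  induction l with
  | nil => rfl
  | cons a t ih =>
    simp only [comp, List.map_cons] at h
    obtain ⟨h1, h2⟩ := List.cons.injEq _ _ _ _ ▸ h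
    have ha : a = Letter.M := by cases a <;> simp_all [Letter.bar]
    rw [List.length_cons, List.replicate_succ, ha, ← ih h2]

theorem stmt_1 (Z W : List Letter) (hZ : Z ≠ []) (hW : W ≠ [])
    (heq : Z ++ W = comp W ++ comp Z)
    (m r d : ℕ) (hm : m = (Z ++ W).length) (hr : r = W.length)
    (hd : d = Nat.gcd m r)
    (hodd : Odd (m / d)) :
    Z ++ W = List.replicate m Letter.M := by
  set S := Z ++ W with hS
  have hSlen : S.length = m := hm.symm
  have hcompS : comp S = comp Z ++ comp W := List.map_append
  -- S.rotate r = comp S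
  have h1 : S.rotate r = comp S := by
    have hrle : r ≤ S.length := by
      simp only [hS, hr, List.length_append]; omega
    rw [List.rotate_eq_drop_append_take hrle, hcompS]
    have hdrop : S.drop r = comp Z := by
      rw [heq]
      have : (comp W).length = r := by simp [comp, hr]
      rw [List.drop_append]
      simp [this]
    have htake : S.take r = comp W := by
      rw [heq]
      have : (comp W).length = r := by simp [comp, hr]
      rw [List.take_append]
      simp [this]
    rw [hdrop, htake]
  have h2 : (comp S).rotate r = S := by
    rw [← comp_rotate, h1, comp_comp]
  -- odd iterates
  have h3 : ∀ j : ℕ, S.rotate ((2 * j + 1) * r) = comp S := by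
    intro j
    induction j with
    | zero => simpa using h1
    | succ j ih =>
      have : (2 * (j + 1) + 1) * r = (2 * j + 1) * r + r + r := by ring
      rw [this, ← List.rotate_rotate, ← List.rotate_rotate, ih, h2, h1]
  -- m/d * r is a multiple of m
  have hm0 : 0 < m := by
    have := List.length_pos_iff.mpr hZ
    rw [hm, hS, List.length_append]; omega
  have hd0 : 0 < d := by
    rw [hd]; exact Nat.gcd_pos_of_pos_left _ hm0
  obtain ⟨m', hm'⟩ : d ∣ m := hd ▸ Nat.gcd_dvd_left m r
  obtain ⟨r', hr'⟩ : d ∣ r := hd ▸ Nat.gcd_dvd_right m r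
  have hdiv : m / d = m' := by rw [hm', Nat.mul_div_cancel_left _ hd0]
  have hmul : (m / d) * r = m * r' := by
    rw [hdiv, hr', hm']; ring
  have h4 : S.rotate ((m / d) * r) = S := by
    rw [hmul, ← List.rotate_mod, hSlen, Nat.mul_mod_right, List.rotate_zero]
  obtain ⟨j, hj⟩ := hodd
  have h5 : comp S = S := by
    rw [← h3 j]
    rw [show (2 * j + 1) = m / d by omega] at *
    exact h4
  have := fixed_repl S h5
  rwa [hSlen] at this
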